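/- The Fermat cubic surface-counting system in the chart p₀₁=1 has exactly 54 points corresponding to triple lines: the solutions of the Fano equations (p₁₂³+p₁₃³+p₁₄³=1, p₀₂p₁₂²+p₀₃p₁₃²+p₀₄p₁₄²=0, p₀₂²p₁₂+p₀₃²p₁₃+p₀₄²p₁₄=0, p₀₂³+p₀₃³+p₀₄³=-1) at which at least two of the three quadrics Q₁=p₀₄p₁₃-p₀₃p₁₄, Q₂=p₀₄p₁₂-p₀₂p₁₄, Q₃=p₀₃p₁₂-p₀₂p₁₃ vanish number exactly 54. -/

import Mathlib

open Polynomial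

/-- Cube roots of unity in `ℂ`. -/
noncomputable def A3 : Finset ℂ := nthRootsFinset 3 (1 : ℂ)

/-- Cube roots of `-1` in `ℂ`. -/
noncomputable def B3 : Finset ℂ := A3.image (fun w => -w)

lemma mem_A3 {x : ℂ} : x ∈ A3 ↔ x ^ 3 = 1 := Polynomial.mem_nthRootsFinset (by norm_num) 1

lemma A3_card : A3.card = 3 :=
  (Complex.isPrimitiveRoot_exp 3 (by norm_num)).card_nthRootsFinset

lemma mem_B3 {x : ℂ} : x ∈ B3 ↔ x ^ 3 = -1 := by
  simp only [B3, Finset.mem_image, mem_A3]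
  constructor
  · rintro ⟨w, hw, rfl⟩
    linear_combination -hw
  · intro h
    exact ⟨-x, by linear_combination -h, by ring⟩

lemma B3_card : B3.card = 3 := by
  rw [B3, Finset.card_image_of_injective _ neg_injective, A3_card]

abbrev P6 := ℂ × ℂ × ℂ × ℂ × ℂ × ℂ

noncomputable def F1 : Finset P6 :=
  (B3 ×ˢ A3).image (fun q => (q.1, 0, 0, 0, q.2, 0))
noncomputable def F2 : Finset P6 :=
  (B3 ×ˢ A3).image (fun q => (q.1, 0, 0, 0, 0, q.2))
noncomputable def F3 : Finset P6 :=
  (B3 ×ˢ A3).image (fun q => (0, q.1, 0, q.2, 0, 0))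
noncomputable def F4 : Finset P6 :=
  (B3 ×ˢ A3).image (fun q => (0, q.1, 0, 0, 0, q.2))
noncomputable def F5 : Finset P6 :=
  (B3 ×ˢ A3).image (fun q => (0, 0, q.1, q.2, 0, 0))
noncomputable def F6 : Finset P6 :=
  (B3 ×ˢ A3).image (fun q => (0, 0, q.1, 0, q.2, 0))

noncomputable def FF : Finset P6 := (F1 ∪ F2) ∪ ((F3 ∪ F4) ∪ (F5 ∪ F6))

lemma mem_F1 {p : P6} : p ∈ F1 ↔ ∃ v u : ℂ, v ^ 3 = -1 ∧ u ^ 3 = 1 ∧ p = (v, 0, 0, 0, u, 0) := by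
  constructor
  · intro h
    obtain ⟨q, hq, rfl⟩ := Finset.mem_image.1 h
    obtain ⟨hv, hu⟩ := Finset.mem_product.1 hq
    exact ⟨q.1, q.2, mem_B3.1 hv, mem_A3.1 hu, rfl⟩
  · rintro ⟨v, u, hv, hu, rfl⟩
    exact Finset.mem_image.2 ⟨(v, u), Finset.mem_product.2 ⟨mem_B3.2 hv, mem_A3.2 hu⟩, rfl⟩

lemma mem_F2 {p : P6} : p ∈ F2 ↔ ∃ v u : ℂ, v ^ 3 = -1 ∧ u ^ 3 = 1 ∧ p = (v, 0, 0, 0, 0, u) := by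
  constructor
  · intro h
    obtain ⟨q, hq, rfl⟩ := Finset.mem_image.1 h
    obtain ⟨hv, hu⟩ := Finset.mem_product.1 hq
    exact ⟨q.1, q.2, mem_B3.1 hv, mem_A3.1 hu, rfl⟩
  · rintro ⟨v, u, hv, hu, rfl⟩
    exact Finset.mem_image.2 ⟨(v, u), Finset.mem_product.2 ⟨mem_B3.2 hv, mem_A3.2 hu⟩, rfl⟩

lemma mem_F3 {p : P6} : p ∈ F3 ↔ ∃ v u : ℂ, v ^ 3 = -1 ∧ u ^ 3 = 1 ∧ p = (0, v, 0, u, 0, 0) := by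
  constructor
  · intro h
    obtain ⟨q, hq, rfl⟩ := Finset.mem_image.1 h
    obtain ⟨hv, hu⟩ := Finset.mem_product.1 hq
    exact ⟨q.1, q.2, mem_B3.1 hv, mem_A3.1 hu, rfl⟩
  · rintro ⟨v, u, hv, hu, rfl⟩
    exact Finset.mem_image.2 ⟨(v, u), Finset.mem_product.2 ⟨mem_B3.2 hv, mem_A3.2 hu⟩, rfl⟩

lemma mem_F4 {p : P6} : p ∈ F4 ↔ ∃ v u : ℂ, v ^ 3 = -1 ∧ u ^ 3 = 1 ∧ p = (0, v, 0, 0, 0, u) := by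
  constructor
  · intro h
    obtain ⟨q, hq, rfl⟩ := Finset.mem_image.1 h
    obtain ⟨hv, hu⟩ := Finset.mem_product.1 hq
    exact ⟨q.1, q.2, mem_B3.1 hv, mem_A3.1 hu, rfl⟩
  · rintro ⟨v, u, hv, hu, rfl⟩
    exact Finset.mem_image.2 ⟨(v, u), Finset.mem_product.2 ⟨mem_B3.2 hv, mem_A3.2 hu⟩, rfl⟩

lemma mem_F5 {p : P6} : p ∈ F5 ↔ ∃ v u : ℂ, v ^ 3 = -1 ∧ u ^ 3 = 1 ∧ p = (0, 0, v, u, 0, 0) := by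
  constructor
  · intro h
    obtain ⟨q, hq, rfl⟩ := Finset.mem_image.1 h
    obtain ⟨hv, hu⟩ := Finset.mem_product.1 hq
    exact ⟨q.1, q.2, mem_B3.1 hv, mem_A3.1 hu, rfl⟩
  · rintro ⟨v, u, hv, hu, rfl⟩
    exact Finset.mem_image.2 ⟨(v, u), Finset.mem_product.2 ⟨mem_B3.2 hv, mem_A3.2 hu⟩, rfl⟩

lemma mem_F6 {p : P6} : p ∈ F6 ↔ ∃ v u : ℂ, v ^ 3 = -1 ∧ u ^ 3 = 1 ∧ p = (0, 0, v, 0, u, 0) := by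
  constructor
  · intro h
    obtain ⟨q, hq, rfl⟩ := Finset.mem_image.1 h
    obtain ⟨hv, hu⟩ := Finset.mem_product.1 hq
    exact ⟨q.1, q.2, mem_B3.1 hv, mem_A3.1 hu, rfl⟩
  · rintro ⟨v, u, hv, hu, rfl⟩
    exact Finset.mem_image.2 ⟨(v, u), Finset.mem_product.2 ⟨mem_B3.2 hv, mem_A3.2 hu⟩, rfl⟩

lemma BA_card : (B3 ×ˢ A3).card = 9 := by
  rw [Finset.card_product, B3_card, A3_card]

lemma F1_card : F1.card = 9 := by
  rw [F1, Finset.card_image_of_injective, BA_card]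
  intro q q' h
  simp only [Prod.mk.injEq] at h
  exact Prod.ext h.1 h.2.2.2.2.1

lemma F2_card : F2.card = 9 := by
  rw [F2, Finset.card_image_of_injective, BA_card]
  intro q q' h
  simp only [Prod.mk.injEq] at h
  exact Prod.ext h.1 h.2.2.2.2.2

lemma F3_card : F3.card = 9 := by
  rw [F3, Finset.card_image_of_injective, BA_card]
  intro q q' h
  simp only [Prod.mk.injEq] at h
  exact Prod.ext h.2.1 h.2.2.2.1

lemma F4_card : F4.card = 9 := by
  rw [F4, Finset.card_image_of_injective, BA_card]
  intro q q' h
  simp only [Prod.mk.injEq] at h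
  exact Prod.ext h.2.1 h.2.2.2.2.2

lemma F5_card : F5.card = 9 := by
  rw [F5, Finset.card_image_of_injective, BA_card]
  intro q q' h
  simp only [Prod.mk.injEq] at h
  exact Prod.ext h.2.2.1 h.2.2.2.1

lemma F6_card : F6.card = 9 := by
  rw [F6, Finset.card_image_of_injective, BA_card]
  intro q q' h
  simp only [Prod.mk.injEq] at h
  exact Prod.ext h.2.2.1 h.2.2.2.2.1

lemma d12 : Disjoint F1 F2 := by
  rw [Finset.disjoint_left]
  intro p h1 h2
  rw [mem_F1] at h1; rw [mem_F2] at h2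
  obtain ⟨v, u, hv, hu, rfl⟩ := h1
  obtain ⟨v', u', hv', hu', h⟩ := h2
  simp only [Prod.mk.injEq] at h
  rw [h.2.2.2.2.1] at hu
  norm_num at hu

lemma d34 : Disjoint F3 F4 := by
  rw [Finset.disjoint_left]
  intro p h1 h2
  rw [mem_F3] at h1; rw [mem_F4] at h2
  obtain ⟨v, u, hv, hu, rfl⟩ := h1
  obtain ⟨v', u', hv', hu', h⟩ := h2
  simp only [Prod.mk.injEq] at h
  rw [h.2.2.2.1] at hu
  norm_num at hu

lemma d56 : Disjoint F5 F6 := by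
  rw [Finset.disjoint_left]
  intro p h1 h2
  rw [mem_F5] at h1; rw [mem_F6] at h2
  obtain ⟨v, u, hv, hu, rfl⟩ := h1
  obtain ⟨v', u', hv', hu', h⟩ := h2
  simp only [Prod.mk.injEq] at h
  rw [h.2.2.2.1] at hu
  norm_num at hu

lemma d12_34 : Disjoint (F1 ∪ F2) (F3 ∪ F4) := by
  rw [Finset.disjoint_left]
  intro p h1 h2
  rw [Finset.mem_union, mem_F1, mem_F2] at h1
  rw [Finset.mem_union, mem_F3, mem_F4] at h2
  have ha : p.1 ^ 3 = -1 := by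
    rcases h1 with ⟨v, u, hv, hu, rfl⟩ | ⟨v, u, hv, hu, rfl⟩ <;> exact hv
  have ha0 : p.1 = 0 := by
    rcases h2 with ⟨v, u, hv, hu, rfl⟩ | ⟨v, u, hv, hu, rfl⟩ <;> rfl
  rw [ha0] at ha
  norm_num at ha

lemma d12_56 : Disjoint (F1 ∪ F2) (F5 ∪ F6) := by
  rw [Finset.disjoint_left]
  intro p h1 h2
  rw [Finset.mem_union, mem_F1, mem_F2] at h1
  rw [Finset.mem_union, mem_F5, mem_F6] at h2
  have ha : p.1 ^ 3 = -1 := by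
    rcases h1 with ⟨v, u, hv, hu, rfl⟩ | ⟨v, u, hv, hu, rfl⟩ <;> exact hv
  have ha0 : p.1 = 0 := by
    rcases h2 with ⟨v, u, hv, hu, rfl⟩ | ⟨v, u, hv, hu, rfl⟩ <;> rfl
  rw [ha0] at ha
  norm_num at ha

lemma d34_56 : Disjoint (F3 ∪ F4) (F5 ∪ F6) := by
  rw [Finset.disjoint_left]
  intro p h1 h2
  rw [Finset.mem_union, mem_F3, mem_F4] at h1
  rw [Finset.mem_union, mem_F5, mem_F6] at h2
  have ha : p.2.1 ^ 3 = -1 := by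
    rcases h1 with ⟨v, u, hv, hu, rfl⟩ | ⟨v, u, hv, hu, rfl⟩ <;> exact hv
  have ha0 : p.2.1 = 0 := by
    rcases h2 with ⟨v, u, hv, hu, rfl⟩ | ⟨v, u, hv, hu, rfl⟩ <;> rfl
  rw [ha0] at ha
  norm_num at ha

lemma FF_card : FF.card = 54 := by
  rw [FF, Finset.card_union_of_disjoint, Finset.card_union_of_disjoint d12,
    Finset.card_union_of_disjoint, Finset.card_union_of_disjoint d34,
    Finset.card_union_of_disjoint d56, F1_card, F2_card, F3_card, F4_card, F5_card, F6_card]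
  · exact d34_56
  · exact Finset.disjoint_union_right.2 ⟨d12_34, d12_56⟩

/-- Core algebraic lemma. -/
lemma main_case (a b c x y z : ℂ)
    (h1 : x ^ 3 + y ^ 3 + z ^ 3 = 1)
    (h2 : a * x ^ 2 + b * y ^ 2 + c * z ^ 2 = 0)
    (h3 : a ^ 2 * x + b ^ 2 * y + c ^ 2 * z = 0)
    (h4 : a ^ 3 + b ^ 3 + c ^ 3 = -1)
    (q2 : c * x - a * z = 0) (q3 : b * x - a * y = 0) :
    a = 0 ∧ x = 0 ∧
      ((b = 0 ∧ z = 0 ∧ y ^ 3 = 1 ∧ c ^ 3 = -1) ∨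
       (c = 0 ∧ y = 0 ∧ z ^ 3 = 1 ∧ b ^ 3 = -1)) := by
  have hx2 : x ^ 2 = 0 := by
    linear_combination x ^ 2 * h4 - a ^ 2 * h2 - b * (a * y + b * x) * q3 -
      c * (a * z + c * x) * q2
  have hx : x = 0 := by
    exact pow_eq_zero_iff (two_ne_zero) |>.1 hx2
  subst hx
  have hay : a * y = 0 := by linear_combination -q3
  have haz : a * z = 0 := by linear_combination -q2
  have E1 : y ^ 3 + z ^ 3 = 1 := by linear_combination h1
  have E2 : b * y ^ 2 + c * z ^ 2 = 0 := by linear_combination h2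
  have E3 : b ^ 2 * y + c ^ 2 * z = 0 := by linear_combination h3
  have ha : a = 0 := by
    by_contra h
    rcases mul_eq_zero.1 hay with h' | hy
    · exact h h'
    rcases mul_eq_zero.1 haz with h' | hz
    · exact h h'
    rw [hy, hz] at E1
    norm_num at E1
  have E4 : b ^ 3 + c ^ 3 = -1 := by
    rw [ha] at h4; linear_combination h4
  refine ⟨ha, rfl, ?_⟩
  have key : c * y - b * z ≠ 0 := by
    intro hE
    have hy : y = 0 := by linear_combination y * E4 - b * E3 - c ^ 2 * hE
    have hbz : b * z = 0 := by linear_combination c * hy - hE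
    have hcz2 : c * z ^ 2 = 0 := by linear_combination E2 - b * y * hy
    have hz3 : z ^ 3 = 1 := by linear_combination E1 - y ^ 2 * hy
    have hz : z ≠ 0 := by
      intro h0; rw [h0] at hz3; norm_num at hz3
    have hc : c = 0 := by
      rcases mul_eq_zero.1 hcz2 with h' | h'
      · exact h'
      · exact absurd (pow_eq_zero_iff (two_ne_zero) |>.1 h') hz
    have hb3 : b ^ 3 = -1 := by rw [hc] at E4; linear_combination E4
    have hb : b ≠ 0 := by
      intro h0; rw [h0] at hb3; norm_num at hb3
    rcases mul_eq_zero.1 hbz with h' | h'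
    · exact hb h'
    · exact hz h'
  have h5 : c * z * (c * y - b * z) = 0 := by linear_combination y * E3 - b * E2
  have h6 : b * y * (b * z - c * y) = 0 := by linear_combination z * E3 - c * E2
  have hcz : c * z = 0 := by
    rcases mul_eq_zero.1 h5 with h' | h'
    · exact h'
    · exact absurd h' key
  have hby : b * y = 0 := by
    rcases mul_eq_zero.1 h6 with h' | h'
    · exact h'
    · exact absurd (by linear_combination -h') key
  rcases mul_eq_zero.1 hcz with hc | hz
  · -- c = 0
    have hb3 : b ^ 3 = -1 := by rw [hc] at E4; linear_combination E4
    have hb : b ≠ 0 := by intro h0; rw [h0] at hb3; norm_num at hb3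
    have hy : y = 0 := by
      rcases mul_eq_zero.1 hby with h' | h'
      · exact absurd h' hb
      · exact h'
    have hz3 : z ^ 3 = 1 := by linear_combination E1 - y ^ 2 * hy
    exact Or.inr ⟨hc, hy, hz3, hb3⟩
  · -- z = 0
    have hy3 : y ^ 3 = 1 := by linear_combination E1 - z ^ 2 * hz
    have hy : y ≠ 0 := by intro h0; rw [h0] at hy3; norm_num at hy3
    have hb : b = 0 := by
      rcases mul_eq_zero.1 hby with h' | h'
      · exact h'
      · exact absurd h' hy
    have hc3 : c ^ 3 = -1 := by rw [hb] at E4; linear_combination E4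
    exact Or.inl ⟨hb, hz, hy3, hc3⟩

theorem fermat_54_triple_lines_in_chart :
    Set.ncard {p : ℂ × ℂ × ℂ × ℂ × ℂ × ℂ |
      (p.2.2.2.1 ^ 3 + p.2.2.2.2.1 ^ 3 + p.2.2.2.2.2 ^ 3 = 1 ∧
       p.1 * p.2.2.2.1 ^ 2 + p.2.1 * p.2.2.2.2.1 ^ 2 + p.2.2.1 * p.2.2.2.2.2 ^ 2 = 0 ∧
       p.1 ^ 2 * p.2.2.2.1 + p.2.1 ^ 2 * p.2.2.2.2.1 + p.2.2.1 ^ 2 * p.2.2.2.2.2 = 0 ∧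
       p.1 ^ 3 + p.2.1 ^ 3 + p.2.2.1 ^ 3 = -1) ∧
      ((p.2.2.1 * p.2.2.2.2.1 - p.2.1 * p.2.2.2.2.2 = 0 ∧
        p.2.2.1 * p.2.2.2.1 - p.1 * p.2.2.2.2.2 = 0) ∨
       (p.2.2.1 * p.2.2.2.2.1 - p.2.1 * p.2.2.2.2.2 = 0 ∧
        p.2.1 * p.2.2.2.1 - p.1 * p.2.2.2.2.1 = 0) ∨
       (p.2.2.1 * p.2.2.2.1 - p.1 * p.2.2.2.2.2 = 0 ∧
        p.2.1 * p.2.2.2.1 - p.1 * p.2.2.2.2.1 = 0))} = 54 := by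
  have hSet : {p : ℂ × ℂ × ℂ × ℂ × ℂ × ℂ |
      (p.2.2.2.1 ^ 3 + p.2.2.2.2.1 ^ 3 + p.2.2.2.2.2 ^ 3 = 1 ∧
       p.1 * p.2.2.2.1 ^ 2 + p.2.1 * p.2.2.2.2.1 ^ 2 + p.2.2.1 * p.2.2.2.2.2 ^ 2 = 0 ∧
       p.1 ^ 2 * p.2.2.2.1 + p.2.1 ^ 2 * p.2.2.2.2.1 + p.2.2.1 ^ 2 * p.2.2.2.2.2 = 0 ∧
       p.1 ^ 3 + p.2.1 ^ 3 + p.2.2.1 ^ 3 = -1) ∧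
      ((p.2.2.1 * p.2.2.2.2.1 - p.2.1 * p.2.2.2.2.2 = 0 ∧
        p.2.2.1 * p.2.2.2.1 - p.1 * p.2.2.2.2.2 = 0) ∨
       (p.2.2.1 * p.2.2.2.2.1 - p.2.1 * p.2.2.2.2.2 = 0 ∧
        p.2.1 * p.2.2.2.1 - p.1 * p.2.2.2.2.1 = 0) ∨
       (p.2.2.1 * p.2.2.2.1 - p.1 * p.2.2.2.2.2 = 0 ∧
        p.2.1 * p.2.2.2.1 - p.1 * p.2.2.2.2.1 = 0))} = (FF : Set P6) := by
    ext p
    obtain ⟨a, b, c, x, y, z⟩ := p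
    simp only [Set.mem_setOf_eq, Finset.coe_sort_coe, Finset.mem_coe]
    constructor
    · rintro ⟨⟨h1, h2, h3, h4⟩, hQ⟩
      rcases hQ with ⟨q1, q2⟩ | ⟨q1, q3⟩ | ⟨q2, q3⟩
      · -- Q1 = Q2 = 0 : c = z = 0
        obtain ⟨hc, hz, hor⟩ := main_case c b a z y x
          (by linear_combination h1) (by linear_combination h2)
          (by linear_combination h3) (by linear_combination h4)
          (by linear_combination -q2) (by linear_combination -q1)
        rcases hor with ⟨hb, hx, hy3, ha3⟩ | ⟨ha, hy, hx3, hb3⟩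
        · subst hb; subst hc; subst hx; subst hz
          exact Finset.mem_union_left _ (Finset.mem_union_left _ (mem_F1.2 ⟨a, y, ha3, hy3, rfl⟩))
        · subst ha; subst hc; subst hy; subst hz
          exact Finset.mem_union_right _ (Finset.mem_union_left _
            (Finset.mem_union_left _ (mem_F3.2 ⟨b, x, hb3, hx3, rfl⟩)))
      · -- Q1 = Q3 = 0 : b = y = 0
        obtain ⟨hb, hy, hor⟩ := main_case b a c y x z
          (by linear_combination h1) (by linear_combination h2)
          (by linear_combination h3) (by linear_combination h4)
          (by linear_combination q1) (by linear_combination -q3)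
        rcases hor with ⟨ha, hz, hx3, hc3⟩ | ⟨hc, hx, hz3, ha3⟩
        · subst ha; subst hb; subst hy; subst hz
          exact Finset.mem_union_right _ (Finset.mem_union_right _
            (Finset.mem_union_left _ (mem_F5.2 ⟨c, x, hc3, hx3, rfl⟩)))
        · subst hb; subst hc; subst hx; subst hy
          exact Finset.mem_union_left _ (Finset.mem_union_right _
            (mem_F2.2 ⟨a, z, ha3, hz3, rfl⟩))
      · -- Q2 = Q3 = 0 : a = x = 0
        obtain ⟨ha, hx, hor⟩ := main_case a b c x y z h1 h2 h3 h4 q2 q3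
        rcases hor with ⟨hb, hz, hy3, hc3⟩ | ⟨hc, hy, hz3, hb3⟩
        · subst ha; subst hb; subst hx; subst hz
          exact Finset.mem_union_right _ (Finset.mem_union_right _
            (Finset.mem_union_right _ (mem_F6.2 ⟨c, y, hc3, hy3, rfl⟩)))
        · subst ha; subst hc; subst hx; subst hy
          exact Finset.mem_union_right _ (Finset.mem_union_left _
            (Finset.mem_union_right _ (mem_F4.2 ⟨b, z, hb3, hz3, rfl⟩)))
    · intro hp
      rw [FF, Finset.mem_union, Finset.mem_union, Finset.mem_union, Finset.mem_union,
        Finset.mem_union, mem_F1, mem_F2, mem_F3, mem_F4, mem_F5, mem_F6] at hp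
      rcases hp with (⟨v, u, hv, hu, hpe⟩ | ⟨v, u, hv, hu, hpe⟩) |
        ((⟨v, u, hv, hu, hpe⟩ | ⟨v, u, hv, hu, hpe⟩) |
         (⟨v, u, hv, hu, hpe⟩ | ⟨v, u, hv, hu, hpe⟩)) <;>
        simp only [Prod.mk.injEq] at hpe <;>
        obtain ⟨e1, e2, e3, e4, e5, e6⟩ := hpe <;> subst e1 <;> subst e2 <;> subst e3 <;>
        subst e4 <;> subst e5 <;> subst e6
      · -- F1 : (v,0,0,0,u,0)
        exact ⟨⟨by linear_combination hu, by ring, by ring, by linear_combination hv⟩,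
          Or.inl ⟨by ring, by ring⟩⟩
      · -- F2 : (v,0,0,0,0,u)
        exact ⟨⟨by linear_combination hu, by ring, by ring, by linear_combination hv⟩,
          Or.inr (Or.inl ⟨by ring, by ring⟩)⟩
      · -- F3 : (0,v,0,u,0,0)
        exact ⟨⟨by linear_combination hu, by ring, by ring, by linear_combination hv⟩,
          Or.inl ⟨by ring, by ring⟩⟩
      · -- F4 : (0,v,0,0,0,u)
        exact ⟨⟨by linear_combination hu, by ring, by ring, by linear_combination hv⟩,
          Or.inr (Or.inr ⟨by ring, by ring⟩)⟩
      · -- F5 : (0,0,v,u,0,0)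
        exact ⟨⟨by linear_combination hu, by ring, by ring, by linear_combination hv⟩,
          Or.inr (Or.inl ⟨by ring, by ring⟩)⟩
      · -- F6 : (0,0,v,0,u,0)
        exact ⟨⟨by linear_combination hu, by ring, by ring, by linear_combination hv⟩,
          Or.inr (Or.inr ⟨by ring, by ring⟩)⟩
  rw [hSet, Set.ncard_coe_finset, FF_card]
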